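/- Let r, s ≥ 0 be integers with n = 2(r+s) ≥ 10, and let v ∈ (ℤ/4ℤ)^n have type (t₀, t₁, t₂, t₃) with t₀ + t₂ ≠ 0 and t₁ + t₃ ≠ 0. Then (n−1) · |λ(v)| ≤ C(n; r,s,r,s). -/

import Mathlib

/-- The number of coordinates of `v ∈ (ℤ/4ℤ)^n` equal to `k`. -/
def typeCount {n : ℕ} (v : Fin n → ZMod 4) (k : ZMod 4) : ℕ :=
  (Finset.univ.filter fun i => v i = k).card

/-- `v ∈ (ℤ/4ℤ)^n` has type `(t₀, t₁, t₂, t₃)`. -/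
def HasType {n : ℕ} (v : Fin n → ZMod 4) (t0 t1 t2 t3 : ℕ) : Prop :=
  typeCount v 0 = t0 ∧ typeCount v 1 = t1 ∧ typeCount v 2 = t2 ∧ typeCount v 3 = t3

instance {n : ℕ} (v : Fin n → ZMod 4) (t0 t1 t2 t3 : ℕ) :
    Decidable (HasType v t0 t1 t2 t3) := by
  unfold HasType; infer_instance

/-- `|S(v, a)|`: the number of vectors `b` of type `(r, s, r, s)` with
`v · b = a` in `ℤ/4ℤ`. -/
def Scard {n : ℕ} (r s : ℕ) (v : Fin n → ZMod 4) (a : ZMod 4) : ℕ :=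
  (Finset.univ.filter fun b : Fin n → ZMod 4 =>
    HasType b r s r s ∧ (∑ i, v i * b i) = a).card

/-- The eigenvalue `λ(v) = |S(v,0)| - |S(v,2)|` of `Cay((ℤ/4ℤ)^n, S)`. -/
def lambdaEV {n : ℕ} (r s : ℕ) (v : Fin n → ZMod 4) : ℤ :=
  (Scard r s v 0 : ℤ) - (Scard r s v 2 : ℤ)

/-- The multinomial coefficient `C(n; r, s, r, s)` (with `n = 2(r+s)`). -/
def multinomRSRS (r s : ℕ) : ℕ :=
  Nat.multinomial Finset.univ ![r, s, r, s]

namespace Stmt15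

open Finset MvPolynomial

/-- the Gaussian integer `i` -/
def Ji : GaussianInt := ⟨0, 1⟩

/-- the character `x ↦ i^x` of `ℤ/4ℤ` -/
def chi (x : ZMod 4) : GaussianInt := Ji ^ x.val

lemma chi_zero : chi 0 = 1 := by decide

lemma chi_add : ∀ x y : ZMod 4, chi (x + y) = chi x * chi y := by decide

lemma chi_re : ∀ x : ZMod 4, (chi x).re =
    (if x = 0 then (1 : ℤ) else 0) - (if x = 2 then 1 else 0) := by decide

lemma chi_sum {α : Type*} (s : Finset α) (f : α → ZMod 4) :
    chi (∑ a ∈ s, f a) = ∏ a ∈ s, chi (f a) := by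
  classical
  induction s using Finset.cons_induction with
  | empty => simp [chi_zero]
  | cons a s ha ih => rw [Finset.sum_cons, Finset.prod_cons, chi_add, ih]

/-- real part as an additive hom -/
def reHom : GaussianInt →+ ℤ where
  toFun := Zsqrtd.re
  map_zero' := rfl
  map_add' := fun _ _ => rfl

@[simp] lemma reHom_apply (z : GaussianInt) : reHom z = z.re := rfl

lemma zmod4_cases : ∀ j : ZMod 4, j = 0 ∨ j = 1 ∨ j = 2 ∨ j = 3 := by decide

/-- exponent multiset of a vector -/
noncomputable def expo {n : ℕ} (v : Fin n → ZMod 4) : ZMod 4 →₀ ℕ :=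
  ∑ l : Fin n, Finsupp.single (v l) 1

lemma expo_apply {n : ℕ} (v : Fin n → ZMod 4) (j : ZMod 4) :
    expo v j = typeCount v j := by
  classical
  rw [expo, Finset.sum_apply', typeCount, Finset.card_filter]
  refine Finset.sum_congr rfl fun l _ => ?_
  rw [Finsupp.single_apply]

lemma expo_eq_iff {n : ℕ} (v w : Fin n → ZMod 4) :
    expo w = expo v ↔ ∀ j, typeCount w j = typeCount v j := by
  constructor
  · intro h j; rw [← expo_apply, ← expo_apply, h]
  · intro h; ext j; rw [expo_apply, expo_apply]; exact h j

lemma typeCount_sum {n : ℕ} (v : Fin n → ZMod 4) :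
    ∑ j : ZMod 4, typeCount v j = n := by
  classical
  have : ∀ j : ZMod 4, typeCount v j = ∑ i : Fin n, if v i = j then 1 else 0 := by
    intro j; rw [typeCount, Finset.card_filter]
  simp_rw [this]
  rw [Finset.sum_comm]
  have : ∀ i : Fin n, (∑ j : ZMod 4, if v i = j then (1:ℕ) else 0) = 1 := by
    intro i
    rw [Finset.sum_ite_eq (Finset.univ) (v i) (fun _ => (1:ℕ))]
    simp
  simp [this]

lemma hasType_sum {n t0 t1 t2 t3 : ℕ} {v : Fin n → ZMod 4} (h : HasType v t0 t1 t2 t3) :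
    t0 + t1 + t2 + t3 = n := by
  obtain ⟨h0, h1, h2, h3⟩ := h
  have := typeCount_sum v
  have h4 : (Finset.univ : Finset (ZMod 4)) = {0, 1, 2, 3} := by decide
  rw [h4, Finset.sum_insert (by decide), Finset.sum_insert (by decide),
    Finset.sum_insert (by decide), Finset.sum_singleton] at this
  omega

end Stmt15
namespace Stmt15
open Finset MvPolynomial

variable {n : ℕ}

/-- the class of all vectors with the same type as `v` -/
noncomputable def cls (v : Fin n → ZMod 4) : Finset (Fin n → ZMod 4) :=
  Finset.univ.filter fun w => expo w = expo v

/-- linear form attached to a coordinate value `β` of `b` -/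
noncomputable def LF (β : ZMod 4) : MvPolynomial (ZMod 4) GaussianInt :=
  ∑ j : ZMod 4, C (chi (j * β)) * X j

/-- the full product polynomial -/
noncomputable def TT (b : Fin n → ZMod 4) : MvPolynomial (ZMod 4) GaussianInt :=
  ∏ l : Fin n, LF (b l)

lemma prod_X_eq_monomial (w : Fin n → ZMod 4) :
    (∏ l : Fin n, (X (w l) : MvPolynomial (ZMod 4) GaussianInt)) = monomial (expo w) 1 := by
  classical
  rw [expo]
  induction (Finset.univ : Finset (Fin n)) using Finset.cons_induction with
  | empty => simp
  | cons a s ha ih =>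
      rw [Finset.prod_cons, Finset.sum_cons, ih, ← pow_one (X (w a) : MvPolynomial (ZMod 4) GaussianInt),
        X_pow_eq_monomial, monomial_mul, one_mul]

lemma coeff_TT (v b : Fin n → ZMod 4) :
    (TT b).coeff (expo v) = ∑ w ∈ cls v, chi (∑ l, w l * b l) := by
  classical
  rw [TT]
  simp only [LF]
  rw [Finset.prod_univ_sum, Fintype.piFinset_univ]
  have hterm : ∀ w : Fin n → ZMod 4,
      (∏ l : Fin n, C (chi (w l * b l)) * X (w l)) =
        C (chi (∑ l, w l * b l)) * monomial (expo w) 1 := by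
    intro w
    rw [Finset.prod_mul_distrib, prod_X_eq_monomial, ← map_prod, ← chi_sum]
  rw [Finset.sum_congr rfl fun w _ => hterm w]
  rw [MvPolynomial.coeff_sum]
  have hcoeff : ∀ w : Fin n → ZMod 4,
      MvPolynomial.coeff (expo v) (C (chi (∑ l, w l * b l)) * monomial (expo w) 1) =
        if expo w = expo v then chi (∑ l, w l * b l) else 0 := by
    intro w
    rw [MvPolynomial.coeff_C_mul, MvPolynomial.coeff_monomial]
    split_ifs <;> simp
  rw [Finset.sum_congr rfl fun w _ => hcoeff w, cls, Finset.sum_filter]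

end Stmt15
namespace Stmt15
open Finset MvPolynomial

variable {n : ℕ}

lemma univ_zmod4 : (Finset.univ : Finset (ZMod 4)) = {0, 1, 2, 3} := by decide

lemma sum_zmod4 {M : Type*} [AddCommMonoid M] (f : ZMod 4 → M) :
    ∑ j : ZMod 4, f j = f 0 + (f 1 + (f 2 + f 3)) := by
  rw [univ_zmod4, Finset.sum_insert (by decide), Finset.sum_insert (by decide),
    Finset.sum_insert (by decide), Finset.sum_singleton]

lemma prod_zmod4 {M : Type*} [CommMonoid M] (f : ZMod 4 → M) :
    ∏ j : ZMod 4, f j = f 0 * (f 1 * (f 2 * f 3)) := by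
  rw [univ_zmod4, Finset.prod_insert (by decide), Finset.prod_insert (by decide),
    Finset.prod_insert (by decide), Finset.prod_singleton]

lemma TT_eq {r s : ℕ} (b : Fin n → ZMod 4) (hb : HasType b r s r s) :
    TT b = LF 0 ^ r * LF 1 ^ s * LF 2 ^ r * LF 3 ^ s := by
  classical
  rw [TT, ← Finset.prod_fiberwise_of_maps_to (fun l _ => Finset.mem_univ (b l))
    (fun l => LF (b l))]
  have hfib : ∀ β : ZMod 4,
      (∏ l ∈ Finset.univ.filter (fun l => b l = β), LF (b l)) = LF β ^ typeCount b β := by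
    intro β
    rw [Finset.prod_congr rfl (fun l hl => by rw [(Finset.mem_filter.1 hl).2]),
      Finset.prod_const, typeCount]
  rw [Finset.prod_congr rfl fun β _ => hfib β, prod_zmod4 (fun β => LF β ^ typeCount b β)]
  obtain ⟨h0, h1, h2, h3⟩ := hb
  rw [h0, h1, h2, h3]
  ring

/-- the `ℤ`-polynomials -/
noncomputable def pp : MvPolynomial (ZMod 4) ℤ := X 0 + X 2
noncomputable def qq : MvPolynomial (ZMod 4) ℤ := X 1 + X 3
noncomputable def PP : MvPolynomial (ZMod 4) ℤ := X 0 - X 2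
noncomputable def QQ : MvPolynomial (ZMod 4) ℤ := X 1 - X 3

noncomputable def Tint (r s : ℕ) : MvPolynomial (ZMod 4) ℤ :=
  (pp ^ 2 - qq ^ 2) ^ r * (PP ^ 2 + QQ ^ 2) ^ s

/-- the coefficient map `ℤ → ℤ[i]` on polynomials -/
noncomputable def θ : MvPolynomial (ZMod 4) ℤ →+* MvPolynomial (ZMod 4) GaussianInt :=
  MvPolynomial.map (Int.castRingHom GaussianInt)

lemma LF0 : LF 0 = X 0 + (X 1 + (X 2 + X 3)) := by
  rw [LF, sum_zmod4 (fun j => C (chi (j * 0)) * X j)]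
  have h : ∀ j : ZMod 4, j * 0 = 0 := by decide
  simp [h, chi_zero]

lemma LF2 : LF 2 = X 0 - X 1 + X 2 - X 3 := by
  rw [LF, sum_zmod4 (fun j => C (chi (j * 2)) * X j)]
  have e0 : (0 : ZMod 4) * 2 = 0 := by decide
  have e1 : (1 : ZMod 4) * 2 = 2 := by decide
  have e2 : (2 : ZMod 4) * 2 = 0 := by decide
  have e3 : (3 : ZMod 4) * 2 = 2 := by decide
  have c2 : chi 2 = -1 := by decide
  rw [e0, e1, e2, e3, chi_zero, c2]
  simp only [map_one, map_neg, one_mul, neg_mul]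
  ring

lemma LF1 : LF 1 = X 0 + C Ji * X 1 - X 2 - C Ji * X 3 := by
  rw [LF, sum_zmod4 (fun j => C (chi (j * 1)) * X j)]
  have e0 : (0 : ZMod 4) * 1 = 0 := by decide
  have e1 : (1 : ZMod 4) * 1 = 1 := by decide
  have e2 : (2 : ZMod 4) * 1 = 2 := by decide
  have e3 : (3 : ZMod 4) * 1 = 3 := by decide
  have c1 : chi 1 = Ji := by decide
  have c2 : chi 2 = -1 := by decide
  have c3 : chi 3 = -Ji := by decide
  rw [e0, e1, e2, e3, chi_zero, c1, c2, c3]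
  simp only [map_one, map_neg, one_mul, neg_mul]
  ring

lemma LF3 : LF 3 = X 0 - C Ji * X 1 - X 2 + C Ji * X 3 := by
  rw [LF, sum_zmod4 (fun j => C (chi (j * 3)) * X j)]
  have e0 : (0 : ZMod 4) * 3 = 0 := by decide
  have e1 : (1 : ZMod 4) * 3 = 3 := by decide
  have e2 : (2 : ZMod 4) * 3 = 2 := by decide
  have e3 : (3 : ZMod 4) * 3 = 1 := by decide
  have c1 : chi 1 = Ji := by decide
  have c2 : chi 2 = -1 := by decide
  have c3 : chi 3 = -Ji := by decide
  rw [e0, e1, e2, e3, chi_zero, c1, c2, c3]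
  simp only [map_one, map_neg, one_mul, neg_mul]
  ring

lemma L02 : LF 0 * LF 2 = θ (pp ^ 2 - qq ^ 2) := by
  rw [LF0, LF2, θ, pp, qq]
  simp only [map_sub, map_add, map_pow, MvPolynomial.map_X]
  ring

lemma L13 : LF 1 * LF 3 = θ (PP ^ 2 + QQ ^ 2) := by
  rw [LF1, LF3, θ, PP, QQ]
  simp only [map_sub, map_add, map_pow, MvPolynomial.map_X]
  have hJ : (C Ji : MvPolynomial (ZMod 4) GaussianInt) * C Ji = -1 := by
    rw [← map_mul]
    have : Ji * Ji = -1 := by decide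
    rw [this, map_neg, map_one]
  linear_combination (-(X 1 - X 3 : MvPolynomial (ZMod 4) GaussianInt) ^ 2) * hJ

lemma TT_map {r s : ℕ} (b : Fin n → ZMod 4) (hb : HasType b r s r s) :
    TT b = θ (Tint r s) := by
  rw [TT_eq b hb]
  have h : LF 0 ^ r * LF 1 ^ s * LF 2 ^ r * LF 3 ^ s
      = (LF 0 * LF 2) ^ r * (LF 1 * LF 3) ^ s := by ring
  rw [h, L02, L13, ← map_pow, ← map_pow, ← map_mul, Tint]

end Stmt15
namespace Stmt15
open Finset MvPolynomial

variable {n : ℕ}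

/-- the signed count `μ(b) = #{w of type t : w·b = 0} - #{w : w·b = 2}` -/
noncomputable def mu (v b : Fin n → ZMod 4) : ℤ :=
  ∑ w ∈ cls v, ((if (∑ l, w l * b l) = 0 then (1:ℤ) else 0) -
    (if (∑ l, w l * b l) = 2 then 1 else 0))

lemma mu_eq_coeff {r s : ℕ} (v b : Fin n → ZMod 4) (hb : HasType b r s r s) :
    mu v b = (Tint r s).coeff (expo v) := by
  have h1 : ((TT b).coeff (expo v)).re = mu v b := by
    rw [coeff_TT]
    rw [show ((∑ w ∈ cls v, chi (∑ l, w l * b l)).re)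
      = reHom (∑ w ∈ cls v, chi (∑ l, w l * b l)) from rfl]
    rw [map_sum, mu]
    exact Finset.sum_congr rfl fun w _ => by rw [reHom_apply, chi_re]
  rw [TT_map b hb, θ, MvPolynomial.coeff_map] at h1
  rw [← h1]
  simp [Zsqrtd.re_intCast]

/-- coefficientwise domination -/
def Dom (f g : MvPolynomial (ZMod 4) ℤ) : Prop := ∀ d, |f.coeff d| ≤ g.coeff d

lemma Dom.add {f1 f2 g1 g2 : MvPolynomial (ZMod 4) ℤ} (h1 : Dom f1 g1) (h2 : Dom f2 g2) :
    Dom (f1 + f2) (g1 + g2) := fun d => by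
  rw [MvPolynomial.coeff_add, MvPolynomial.coeff_add]
  exact (abs_add_le _ _).trans (add_le_add (h1 d) (h2 d))

lemma Dom.sub {f1 f2 g1 g2 : MvPolynomial (ZMod 4) ℤ} (h1 : Dom f1 g1) (h2 : Dom f2 g2) :
    Dom (f1 - f2) (g1 + g2) := fun d => by
  rw [MvPolynomial.coeff_sub, MvPolynomial.coeff_add]
  exact (abs_sub _ _).trans (add_le_add (h1 d) (h2 d))

lemma Dom.mul {f1 f2 g1 g2 : MvPolynomial (ZMod 4) ℤ} (h1 : Dom f1 g1) (h2 : Dom f2 g2) :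
    Dom (f1 * f2) (g1 * g2) := fun d => by
  rw [MvPolynomial.coeff_mul, MvPolynomial.coeff_mul]
  refine (Finset.abs_sum_le_sum_abs _ _).trans (Finset.sum_le_sum fun x _ => ?_)
  rw [abs_mul]
  exact mul_le_mul (h1 x.1) (h2 x.2) (abs_nonneg _) ((abs_nonneg _).trans (h1 x.1))

lemma Dom.one : Dom 1 1 := fun d => by
  rw [MvPolynomial.coeff_one]
  split_ifs <;> simp

lemma Dom.pow {f g : MvPolynomial (ZMod 4) ℤ} (h : Dom f g) (m : ℕ) :
    Dom (f ^ m) (g ^ m) := by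
  induction m with
  | zero => simpa using Dom.one
  | succ m ih => rw [pow_succ, pow_succ]; exact ih.mul h

lemma Dom.X (j : ZMod 4) : Dom (X j) (X j) := fun d => by
  rw [MvPolynomial.coeff_X']
  split_ifs <;> simp

lemma dom_Tint (r s : ℕ) : Dom (Tint r s) ((pp ^ 2 + qq ^ 2) ^ (r + s)) := by
  have dp : Dom pp pp := Dom.add (Dom.X 0) (Dom.X 2)
  have dq : Dom qq qq := Dom.add (Dom.X 1) (Dom.X 3)
  have dP : Dom PP pp := Dom.sub (Dom.X 0) (Dom.X 2)
  have dQ : Dom QQ qq := Dom.sub (Dom.X 1) (Dom.X 3)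
  have h1 : Dom (pp ^ 2 - qq ^ 2) (pp ^ 2 + qq ^ 2) := Dom.sub (dp.pow 2) (dq.pow 2)
  have h2 : Dom (PP ^ 2 + QQ ^ 2) (pp ^ 2 + qq ^ 2) := Dom.add (dP.pow 2) (dQ.pow 2)
  have h3 := (h1.pow r).mul (h2.pow s)
  rwa [← pow_add] at h3

end Stmt15
namespace Stmt15
open Finset MvPolynomial

variable {n : ℕ}

/-- the 4-variable exponent vector -/
noncomputable def EE (c0 c1 c2 c3 : ℕ) : ZMod 4 →₀ ℕ :=
  Finsupp.single (0 : ZMod 4) c0 + Finsupp.single (2 : ZMod 4) c2 +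
    (Finsupp.single (1 : ZMod 4) c1 + Finsupp.single (3 : ZMod 4) c3)

lemma EE_apply0 (c0 c1 c2 c3 : ℕ) : EE c0 c1 c2 c3 (0 : ZMod 4) = c0 := by
  rw [EE, Finsupp.add_apply, Finsupp.add_apply, Finsupp.add_apply,
    Finsupp.single_eq_same, Finsupp.single_eq_of_ne (by decide),
    Finsupp.single_eq_of_ne (by decide), Finsupp.single_eq_of_ne (by decide)]
  omega

lemma EE_apply1 (c0 c1 c2 c3 : ℕ) : EE c0 c1 c2 c3 (1 : ZMod 4) = c1 := by
  rw [EE, Finsupp.add_apply, Finsupp.add_apply, Finsupp.add_apply,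
    Finsupp.single_eq_same, Finsupp.single_eq_of_ne (by decide),
    Finsupp.single_eq_of_ne (by decide), Finsupp.single_eq_of_ne (by decide)]
  omega

lemma EE_apply2 (c0 c1 c2 c3 : ℕ) : EE c0 c1 c2 c3 (2 : ZMod 4) = c2 := by
  rw [EE, Finsupp.add_apply, Finsupp.add_apply, Finsupp.add_apply,
    Finsupp.single_eq_same, Finsupp.single_eq_of_ne (by decide),
    Finsupp.single_eq_of_ne (by decide), Finsupp.single_eq_of_ne (by decide)]
  omega

lemma EE_apply3 (c0 c1 c2 c3 : ℕ) : EE c0 c1 c2 c3 (3 : ZMod 4) = c3 := by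
  rw [EE, Finsupp.add_apply, Finsupp.add_apply, Finsupp.add_apply,
    Finsupp.single_eq_same, Finsupp.single_eq_of_ne (by decide),
    Finsupp.single_eq_of_ne (by decide), Finsupp.single_eq_of_ne (by decide)]
  omega

lemma EE_eq_expo_iff (c0 c1 c2 c3 : ℕ) (v : Fin n → ZMod 4) :
    EE c0 c1 c2 c3 = expo v ↔
      c0 = typeCount v 0 ∧ c1 = typeCount v 1 ∧ c2 = typeCount v 2 ∧ c3 = typeCount v 3 := by
  constructor
  · intro h
    refine ⟨?_, ?_, ?_, ?_⟩
    · have := DFunLike.congr_fun h (0 : ZMod 4); rwa [EE_apply0, expo_apply] at this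
    · have := DFunLike.congr_fun h (1 : ZMod 4); rwa [EE_apply1, expo_apply] at this
    · have := DFunLike.congr_fun h (2 : ZMod 4); rwa [EE_apply2, expo_apply] at this
    · have := DFunLike.congr_fun h (3 : ZMod 4); rwa [EE_apply3, expo_apply] at this
  · rintro ⟨h0, h1, h2, h3⟩
    ext w
    rcases zmod4_cases w with h | h | h | h <;> subst h
    · rw [EE_apply0, expo_apply, h0]
    · rw [EE_apply1, expo_apply, h1]
    · rw [EE_apply2, expo_apply, h2]
    · rw [EE_apply3, expo_apply, h3]

lemma X_add_X_pow (a b : ZMod 4) (A : ℕ) :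
    (X a + X b : MvPolynomial (ZMod 4) ℤ) ^ A =
      ∑ j ∈ Finset.range (A + 1),
        monomial (Finsupp.single a j + Finsupp.single b (A - j)) ((A.choose j : ℤ)) := by
  rw [add_pow]
  refine Finset.sum_congr rfl fun j hj => ?_
  rw [X_pow_eq_monomial, X_pow_eq_monomial, monomial_mul,
    ← map_natCast (C : ℤ →+* MvPolynomial (ZMod 4) ℤ) (A.choose j), C_apply, monomial_mul]
  rw [add_zero, one_mul, one_mul]

lemma coeff_pq (A B : ℕ) (v : Fin n → ZMod 4) :
    (pp ^ A * qq ^ B).coeff (expo v) =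
      if typeCount v 0 + typeCount v 2 = A ∧ typeCount v 1 + typeCount v 3 = B
      then ((A.choose (typeCount v 0)) * (B.choose (typeCount v 1)) : ℤ) else 0 := by
  classical
  rw [pp, qq, X_add_X_pow, X_add_X_pow, Finset.sum_mul_sum]
  have hmono : ∀ j l : ℕ,
      (monomial (Finsupp.single (0:ZMod 4) j + Finsupp.single (2:ZMod 4) (A - j)) ((A.choose j : ℤ))) *
        (monomial (Finsupp.single (1:ZMod 4) l + Finsupp.single (3:ZMod 4) (B - l)) ((B.choose l : ℤ)))
      = monomial (EE j l (A - j) (B - l)) ((A.choose j : ℤ) * (B.choose l : ℤ)) := by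
    intro j l; rw [monomial_mul, EE]
  simp_rw [hmono, MvPolynomial.coeff_sum, MvPolynomial.coeff_monomial, EE_eq_expo_iff]
  by_cases hcond : typeCount v 0 + typeCount v 2 = A ∧ typeCount v 1 + typeCount v 3 = B
  · rw [if_pos hcond]
    obtain ⟨hA, hB⟩ := hcond
    rw [Finset.sum_eq_single (typeCount v 0)]
    · rw [Finset.sum_eq_single (typeCount v 1)]
      · rw [if_pos ⟨rfl, rfl, by omega, by omega⟩]
      · intro l hl hne
        rw [if_neg]; rintro ⟨-, h1, -, -⟩; exact hne h1
      · intro habs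
        exact absurd (Finset.mem_range.2 (by omega)) habs
    · intro j hj hne
      refine Finset.sum_eq_zero fun l hl => ?_
      rw [if_neg]; rintro ⟨h0, -, -, -⟩; exact hne h0
    · intro habs
      exact absurd (Finset.mem_range.2 (by omega)) habs
  · rw [if_neg hcond]
    refine Finset.sum_eq_zero fun j hj => Finset.sum_eq_zero fun l hl => ?_
    rw [if_neg]
    rintro ⟨h0, h1, h2, h3⟩
    rw [Finset.mem_range] at hj hl
    exact hcond ⟨by omega, by omega⟩

lemma coeff_dom (N : ℕ) (v : Fin n → ZMod 4)
    (hmk : typeCount v 0 + typeCount v 2 + (typeCount v 1 + typeCount v 3) = 2 * N) :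
    ((pp ^ 2 + qq ^ 2) ^ N).coeff (expo v) =
      if Even (typeCount v 0 + typeCount v 2)
      then ((N.choose ((typeCount v 0 + typeCount v 2) / 2))
        * ((typeCount v 0 + typeCount v 2).choose (typeCount v 0))
        * ((typeCount v 1 + typeCount v 3).choose (typeCount v 1)) : ℤ)
      else 0 := by
  classical
  rw [add_pow, MvPolynomial.coeff_sum]
  have hterm : ∀ h ∈ Finset.range (N + 1),
      MvPolynomial.coeff (expo v)
        ((pp ^ 2) ^ h * (qq ^ 2) ^ (N - h) * ((N.choose h : ℕ) : MvPolynomial (ZMod 4) ℤ))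
        = (N.choose h : ℤ) * (if typeCount v 0 + typeCount v 2 = 2 * h ∧
              typeCount v 1 + typeCount v 3 = 2 * (N - h)
            then (((2*h).choose (typeCount v 0)) * ((2*(N-h)).choose (typeCount v 1)) : ℤ)
            else 0) := by
    intro h _
    rw [← pow_mul, ← pow_mul, ← map_natCast (C : ℤ →+* MvPolynomial (ZMod 4) ℤ) (N.choose h),
      mul_comm _ (C ((N.choose h : ℤ) : ℤ)), ← mul_assoc, mul_assoc (C _),
      MvPolynomial.coeff_C_mul, coeff_pq]
  rw [Finset.sum_congr rfl hterm]
  by_cases hEv : Even (typeCount v 0 + typeCount v 2)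
  · rw [if_pos hEv]
    obtain ⟨c, hc⟩ := hEv
    have h2c : 2 * ((typeCount v 0 + typeCount v 2) / 2) = typeCount v 0 + typeCount v 2 := by omega
    rw [Finset.sum_eq_single ((typeCount v 0 + typeCount v 2) / 2)]
    · rw [if_pos ⟨by omega, by omega⟩, h2c]
      have h2c' : 2 * (N - (typeCount v 0 + typeCount v 2) / 2)
          = typeCount v 1 + typeCount v 3 := by omega
      rw [h2c', mul_assoc]
    · intro h hh hne
      rw [if_neg, mul_zero]
      rintro ⟨h1, -⟩
      exact hne (by omega)
    · intro habs
      exact absurd (Finset.mem_range.2 (by omega)) habs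
  · rw [if_neg hEv]
    refine Finset.sum_eq_zero fun h hh => ?_
    rw [if_neg, mul_zero]
    rintro ⟨h1, -⟩
    exact hEv ⟨h, by omega⟩

end Stmt15
namespace Stmt15
open Finset MvPolynomial

variable {n : ℕ}

lemma exists_perm (v w : Fin n → ZMod 4) (h : ∀ j, typeCount w j = typeCount v j) :
    ∃ σ : Equiv.Perm (Fin n), ∀ i, v (σ i) = w i := by
  classical
  have hcard : ∀ j : ZMod 4, Fintype.card {i // w i = j} = Fintype.card {i // v i = j} := by
    intro j
    rw [Fintype.card_subtype, Fintype.card_subtype]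
    exact h j
  let F : ∀ j : ZMod 4, {i // w i = j} ≃ {i // v i = j} :=
    fun j => Fintype.equivOfCardEq (hcard j)
  refine ⟨(Equiv.sigmaFiberEquiv w).symm.trans
    ((Equiv.sigmaCongrRight F).trans (Equiv.sigmaFiberEquiv v)), ?_⟩
  intro i
  have h1 : (Equiv.sigmaFiberEquiv w).symm i = ⟨w i, ⟨i, rfl⟩⟩ := rfl
  simp only [Equiv.trans_apply, h1, Equiv.sigmaCongrRight_apply, Equiv.sigmaFiberEquiv]
  exact (F (w i) ⟨i, rfl⟩).prop

lemma typeCount_comp (b : Fin n → ZMod 4) (σ : Equiv.Perm (Fin n)) (j : ZMod 4) :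
    typeCount (b ∘ σ) j = typeCount b j := by
  classical
  unfold typeCount
  refine Finset.card_nbij' (fun i => σ i) (fun i => σ.symm i) ?_ ?_ ?_ ?_
  · intro i hi
    simp only [Finset.mem_coe, Finset.mem_filter, Finset.mem_univ, true_and] at hi ⊢
    exact hi
  · intro i hi
    simp only [Finset.mem_coe, Finset.mem_filter, Finset.mem_univ, true_and, Function.comp_apply] at hi ⊢
    simpa using hi
  · intro i _; simp
  · intro i _; simp

lemma hasType_comp {r s : ℕ} (b : Fin n → ZMod 4) (σ : Equiv.Perm (Fin n)) :
    HasType (b ∘ σ) r s r s ↔ HasType b r s r s := by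
  unfold HasType
  simp_rw [typeCount_comp]

lemma Scard_comp {r s : ℕ} (v : Fin n → ZMod 4) (σ : Equiv.Perm (Fin n)) (a : ZMod 4) :
    Scard r s (v ∘ σ) a = Scard r s v a := by
  classical
  unfold Scard
  refine Finset.card_nbij' (fun b => b ∘ σ.symm) (fun b => b ∘ σ) ?_ ?_ ?_ ?_
  · intro b hb
    simp only [Finset.mem_coe, Finset.mem_filter, Finset.mem_univ, true_and] at hb ⊢
    obtain ⟨h1, h2⟩ := hb
    constructor
    · exact (hasType_comp b σ.symm).mpr h1
    · rw [← h2]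
      refine Fintype.sum_equiv σ.symm _ _ fun i => ?_
      simp
  · intro b hb
    simp only [Finset.mem_coe, Finset.mem_filter, Finset.mem_univ, true_and] at hb ⊢
    obtain ⟨h1, h2⟩ := hb
    refine ⟨(hasType_comp b σ).mpr h1, ?_⟩
    rw [← h2]
    refine Fintype.sum_equiv σ _ _ fun i => ?_
    simp
  · intro b _; funext i; simp
  · intro b _; funext i; simp

lemma Scard_of_mem_cls {r s : ℕ} {v w : Fin n → ZMod 4} (hw : w ∈ cls v) (a : ZMod 4) :
    Scard r s w a = Scard r s v a := by
  have h : ∀ j, typeCount w j = typeCount v j :=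
    (expo_eq_iff v w).mp ((Finset.mem_filter.1 hw).2)
  obtain ⟨σ, hσ⟩ := exists_perm v w h
  have : v ∘ σ = w := funext hσ
  rw [← this, Scard_comp]

/-- the set of all `b` of type `(r,s,r,s)` -/
noncomputable def Sset (n r s : ℕ) : Finset (Fin n → ZMod 4) :=
  Finset.univ.filter fun b => HasType b r s r s

lemma Scard_eq_sum {r s : ℕ} (w : Fin n → ZMod 4) (a : ZMod 4) :
    (Scard r s w a : ℤ) = ∑ b ∈ Sset n r s, (if (∑ l, w l * b l) = a then (1:ℤ) else 0) := by
  classical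
  rw [Scard, Sset, Finset.sum_boole, Finset.filter_filter]

lemma key_identity {r s : ℕ} (v : Fin n → ZMod 4) :
    ((cls v).card : ℤ) * lambdaEV r s v = ∑ b ∈ Sset n r s, mu v b := by
  classical
  have hconst : ∀ w ∈ cls v, lambdaEV r s w = lambdaEV r s v := by
    intro w hw
    rw [lambdaEV, lambdaEV, Scard_of_mem_cls hw, Scard_of_mem_cls hw]
  calc ((cls v).card : ℤ) * lambdaEV r s v
      = ∑ w ∈ cls v, lambdaEV r s w := by
        rw [Finset.sum_congr rfl hconst, Finset.sum_const, nsmul_eq_mul]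
    _ = ∑ w ∈ cls v, ∑ b ∈ Sset n r s,
          ((if (∑ l, w l * b l) = 0 then (1:ℤ) else 0) -
           (if (∑ l, w l * b l) = 2 then 1 else 0)) := by
        refine Finset.sum_congr rfl fun w _ => ?_
        rw [lambdaEV, Scard_eq_sum, Scard_eq_sum, ← Finset.sum_sub_distrib]
    _ = ∑ b ∈ Sset n r s, mu v b := by
        rw [Finset.sum_comm]
        rfl

end Stmt15
namespace Stmt15
open Finset

lemma choose_two_le {N : ℕ} (hN : 5 ≤ N) : 2 * N - 1 ≤ N.choose 2 := by
  rw [Nat.choose_two_right, Nat.le_div_iff_mul_le (by norm_num)]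
  have h1 : 4 ≤ N - 1 := by omega
  have h2 : N * 4 ≤ N * (N - 1) := Nat.mul_le_mul_left N h1
  omega

lemma choose_mono_mid {N h : ℕ} (h2 : 2 ≤ h) (hh : 2 * h ≤ N) : N.choose 2 ≤ N.choose h := by
  induction h, h2 using Nat.le_induction with
  | base => exact le_refl _
  | succ h hh2 ih =>
      have hstep : N.choose h ≤ N.choose (h + 1) :=
        Nat.choose_le_succ_of_lt_half_left (by omega)
      exact le_trans (ih (by omega)) hstep

lemma choose_mid_ge {N h : ℕ} (h2 : 2 ≤ h) (hh : h ≤ N - 2) (hN : 5 ≤ N) :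
    2 * N - 1 ≤ N.choose h := by
  rcases le_or_gt (2 * h) N with hc | hc
  · exact le_trans (choose_two_le hN) (choose_mono_mid h2 hc)
  · have hsym : N.choose (N - h) = N.choose h := Nat.choose_symm (by omega)
    rw [← hsym]
    exact le_trans (choose_two_le hN) (choose_mono_mid (by omega) (by omega))

lemma binom_equality_case {N h : ℕ} (hh : N.choose h = N) (hch : (2*N).choose (2*h) = (2*N).choose 2)
    (hN : 1 ≤ N) : (2 * N - 1) * N.choose h ≤ (2 * N).choose (2 * h) := by
  rw [hh, hch, Nat.choose_two_right]
  set d := 2 * N - 1 with hd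
  have e : 2 * N * (2 * N - 1) = 2 * (N * d) := by rw [hd]; ring
  rw [e, Nat.mul_div_cancel_left _ (by norm_num : 0 < 2)]
  rw [Nat.mul_comm]

lemma binom_key {N h : ℕ} (hN : 5 ≤ N) (h1 : 1 ≤ h) (h2 : h ≤ N - 1) :
    (2 * N - 1) * N.choose h ≤ (2 * N).choose (2 * h) := by
  rcases eq_or_lt_of_le h1 with he | hlt1
  · -- h = 1
    have hh : h = 1 := he.symm
    subst hh
    refine binom_equality_case (Nat.choose_one_right N) ?_ (by omega)
    norm_num
  rcases eq_or_lt_of_le h2 with he2 | hlt2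
  · -- h = N - 1
    subst he2
    refine binom_equality_case ?_ ?_ (by omega)
    · rw [show N - 1 = N - 1 from rfl]
      have : N.choose (N - 1) = N.choose 1 := by
        rw [← Nat.choose_symm (by omega : 1 ≤ N)]
      rw [this, Nat.choose_one_right]
    · have : 2 * (N - 1) = 2 * N - 2 := by omega
      rw [this, show (2*N - 2) = 2*N - 2 from rfl]
      have h22 : (2*N).choose (2*N - 2) = (2*N).choose 2 := Nat.choose_symm (by omega)
      exact h22
  · -- middle case
    have hvdm : N.choose h * N.choose h ≤ (2 * N).choose (2 * h) := by
      have hv := Nat.add_choose_eq N N (2 * h)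
      rw [← two_mul] at hv
      rw [hv]
      have hmem : ((h, h) : ℕ × ℕ) ∈ Finset.HasAntidiagonal.antidiagonal (2 * h) :=
        Finset.HasAntidiagonal.mem_antidiagonal.2 (by omega)
      exact Finset.single_le_sum (f := fun ij : ℕ × ℕ => N.choose ij.1 * N.choose ij.2)
        (fun i _ => Nat.zero_le _) hmem
    refine le_trans ?_ hvdm
    exact Nat.mul_le_mul_right _ (choose_mid_ge (by omega) (by omega) hN)

end Stmt15
namespace Stmt15
open Finset

variable {n : ℕ}

/-- vector built from a triple of sets -/
def gvec (M A B : Finset (Fin n)) : Fin n → ZMod 4 := fun i =>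
  if i ∈ A then 0 else if i ∈ M then 2 else if i ∈ B then 1 else 3

lemma gvec_filter0 (M A B : Finset (Fin n)) (hA : A ⊆ M) (hB : B ⊆ Finset.univ \ M) :
    Finset.univ.filter (fun i => gvec M A B i = 0) = A := by
  ext i
  rw [Finset.mem_filter]
  simp only [Finset.mem_filter, Finset.mem_univ, true_and, gvec]
  split_ifs with h1 h2 h3
  · exact iff_of_true rfl h1
  · exact iff_of_false (by decide) h1
  · exact iff_of_false (by decide) h1
  · exact iff_of_false (by decide) h1

lemma gvec_filter2 (M A B : Finset (Fin n)) (hA : A ⊆ M) (hB : B ⊆ Finset.univ \ M) :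
    Finset.univ.filter (fun i => gvec M A B i = 2) = M \ A := by
  ext i
  rw [Finset.mem_filter]
  simp only [Finset.mem_filter, Finset.mem_univ, true_and, gvec, Finset.mem_sdiff]
  split_ifs with h1 h2 h3
  · exact iff_of_false (by decide) (fun hc => hc.2 h1)
  · exact iff_of_true rfl ⟨h2, h1⟩
  · exact iff_of_false (by decide) (fun hc => h2 hc.1)
  · exact iff_of_false (by decide) (fun hc => h2 hc.1)

lemma gvec_filter1 (M A B : Finset (Fin n)) (hA : A ⊆ M) (hB : B ⊆ Finset.univ \ M) :
    Finset.univ.filter (fun i => gvec M A B i = 1) = B := by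
  ext i
  rw [Finset.mem_filter]
  simp only [Finset.mem_filter, Finset.mem_univ, true_and, gvec]
  split_ifs with h1 h2 h3
  · exact iff_of_false (by decide) (fun hB' => (Finset.mem_sdiff.1 (hB hB')).2 (hA h1))
  · exact iff_of_false (by decide) (fun hB' => (Finset.mem_sdiff.1 (hB hB')).2 h2)
  · exact iff_of_true rfl h3
  · exact iff_of_false (by decide) h3

lemma gvec_filter3 (M A B : Finset (Fin n)) (hA : A ⊆ M) (hB : B ⊆ Finset.univ \ M) :
    Finset.univ.filter (fun i => gvec M A B i = 3) = (Finset.univ \ M) \ B := by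
  ext i
  rw [Finset.mem_filter]
  simp only [Finset.mem_filter, Finset.mem_univ, true_and, gvec, Finset.mem_sdiff]
  split_ifs with h1 h2 h3
  · exact iff_of_false (by decide) (fun hc => hc.1 (hA h1))
  · exact iff_of_false (by decide) (fun hc => hc.1 h2)
  · exact iff_of_false (by decide) (fun hc => hc.2 h3)
  · exact iff_of_true rfl ⟨h2, h3⟩

lemma gvec_filter02 (M A B : Finset (Fin n)) (hA : A ⊆ M) (hB : B ⊆ Finset.univ \ M) :
    Finset.univ.filter (fun i => gvec M A B i = 0 ∨ gvec M A B i = 2) = M := by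
  ext i
  rw [Finset.mem_filter]
  simp only [Finset.mem_filter, Finset.mem_univ, true_and, gvec]
  split_ifs with h1 h2 h3
  · exact iff_of_true (Or.inl rfl) (hA h1)
  · exact iff_of_true (Or.inr rfl) h2
  · exact iff_of_false (by decide) h2
  · exact iff_of_false (by decide) h2

lemma cls_lower {t0 t1 t2 t3 : ℕ} (v : Fin n → ZMod 4) (hv : HasType v t0 t1 t2 t3) :
    n.choose (t0 + t2) * ((t0 + t2).choose t0 * ((t1 + t3).choose t1)) ≤ (cls v).card := by
  classical
  have hsum := hasType_sum hv
  obtain ⟨e0, e1, e2, e3⟩ := hv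
  set idx := (Finset.univ.powersetCard (t0 + t2)).sigma
      (fun M : Finset (Fin n) => (M.powersetCard t0) ×ˢ ((Finset.univ \ M).powersetCard t1))
    with hidx
  have hcard : idx.card
      = n.choose (t0 + t2) * ((t0 + t2).choose t0 * ((t1 + t3).choose t1)) := by
    rw [hidx, Finset.card_sigma]
    have hconst : ∀ M ∈ (Finset.univ : Finset (Fin n)).powersetCard (t0 + t2),
        ((M.powersetCard t0) ×ˢ ((Finset.univ \ M).powersetCard t1)).card
          = (t0 + t2).choose t0 * ((t1 + t3).choose t1) := by
      intro M hM
      obtain ⟨hMsub, hMcard⟩ := Finset.mem_powersetCard.1 hM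
      have hdiff : (Finset.univ \ M).card = t1 + t3 := by
        rw [Finset.card_sdiff_of_subset (Finset.subset_univ M), Finset.card_univ, Fintype.card_fin, hMcard]
        omega
      rw [Finset.card_product, Finset.card_powersetCard, Finset.card_powersetCard, hMcard, hdiff]
    rw [Finset.sum_congr rfl hconst, Finset.sum_const, Finset.card_powersetCard,
      Finset.card_univ, Fintype.card_fin, smul_eq_mul]
  rw [← hcard]
  refine Finset.card_le_card_of_injOn (fun x => gvec x.1 x.2.1 x.2.2) ?_ ?_
  · rintro ⟨M, A, B⟩ hx
    simp only [Finset.mem_coe, hidx, Finset.mem_sigma, Finset.mem_product] at hx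
    obtain ⟨hM, hA, hB⟩ := hx
    obtain ⟨hMsub, hMcard⟩ := Finset.mem_powersetCard.1 hM
    obtain ⟨hAsub, hAcard⟩ := Finset.mem_powersetCard.1 hA
    obtain ⟨hBsub, hBcard⟩ := Finset.mem_powersetCard.1 hB
    rw [cls, Finset.mem_coe, Finset.mem_filter]
    refine ⟨Finset.mem_univ _, (expo_eq_iff v _).2 ?_⟩
    intro j
    rcases zmod4_cases j with h | h | h | h <;> subst h
    · rw [e0, typeCount, gvec_filter0 M A B hAsub hBsub, hAcard]
    · rw [e1, typeCount, gvec_filter1 M A B hAsub hBsub, hBcard]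
    · rw [e2, typeCount, gvec_filter2 M A B hAsub hBsub]
      rw [Finset.card_sdiff_of_subset hAsub, hMcard, hAcard]
      omega
    · rw [e3, typeCount, gvec_filter3 M A B hAsub hBsub]
      rw [Finset.card_sdiff_of_subset hBsub, Finset.card_sdiff_of_subset (Finset.subset_univ M),
        Finset.card_univ, Fintype.card_fin, hMcard, hBcard]
      omega
  · rintro ⟨M, A, B⟩ hx ⟨M', A', B'⟩ hy hg
    simp only [Finset.mem_coe, hidx, Finset.mem_sigma, Finset.mem_product] at hx hy
    obtain ⟨hM, hA, hB⟩ := hx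
    obtain ⟨hM', hA', hB'⟩ := hy
    obtain ⟨hMsub, hMcard⟩ := Finset.mem_powersetCard.1 hM
    obtain ⟨hAsub, hAcard⟩ := Finset.mem_powersetCard.1 hA
    obtain ⟨hBsub, hBcard⟩ := Finset.mem_powersetCard.1 hB
    obtain ⟨hMsub', hMcard'⟩ := Finset.mem_powersetCard.1 hM'
    obtain ⟨hAsub', hAcard'⟩ := Finset.mem_powersetCard.1 hA'
    obtain ⟨hBsub', hBcard'⟩ := Finset.mem_powersetCard.1 hB'
    simp only at hg
    have hA0 : A = A' := by
      rw [← gvec_filter0 M A B hAsub hBsub, hg, gvec_filter0 M' A' B' hAsub' hBsub']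
    have hMeq : M = M' := by
      rw [← gvec_filter02 M A B hAsub hBsub, hg, gvec_filter02 M' A' B' hAsub' hBsub']
    have hB0 : B = B' := by
      rw [← gvec_filter1 M A B hAsub hBsub, hg, gvec_filter1 M' A' B' hAsub' hBsub']
    subst hA0; subst hMeq; subst hB0
    rfl

end Stmt15
namespace Stmt15
open Finset

variable {n : ℕ}

lemma multinom_val (r s : ℕ) :
    multinomRSRS r s
      = (r + (s + (r + s))).choose r * ((s + (r + s)).choose s * ((r + s).choose r)) := by
  rw [multinomRSRS]
  have huniv : (Finset.univ : Finset (Fin 4)) = insert 0 (insert 1 (insert 2 {3})) := by decide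
  rw [huniv, Nat.multinomial_insert (by decide), Nat.multinomial_insert (by decide),
    Nat.multinomial_insert (by decide), Nat.multinomial_singleton,
    Finset.sum_insert (by decide), Finset.sum_insert (by decide), Finset.sum_singleton]
  simp only [show ![r,s,r,s] 0 = r from rfl, show ![r,s,r,s] 1 = s from rfl,
    show ![r,s,r,s] 2 = r from rfl, show ![r,s,r,s] 3 = s from rfl, mul_one]

lemma Sset_le (r s : ℕ) (hn : n = 2 * (r + s)) :
    (Sset n r s).card ≤ multinomRSRS r s := by
  classical
  set idx2 := ((Finset.univ : Finset (Fin n)).powersetCard r).sigma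
      (fun A0 : Finset (Fin n) => ((Finset.univ \ A0).powersetCard s).sigma
        (fun A1 : Finset (Fin n) => (((Finset.univ \ A0) \ A1).powersetCard r))) with hidx2
  have hcard : idx2.card = n.choose r * ((n - r).choose s * ((n - r - s).choose r)) := by
    rw [hidx2, Finset.card_sigma]
    have hconst : ∀ A0 ∈ (Finset.univ : Finset (Fin n)).powersetCard r,
        (((Finset.univ \ A0).powersetCard s).sigma
          (fun A1 : Finset (Fin n) => (((Finset.univ \ A0) \ A1).powersetCard r))).card
          = (n - r).choose s * ((n - r - s).choose r) := by
      intro A0 hA0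
      obtain ⟨hA0sub, hA0card⟩ := Finset.mem_powersetCard.1 hA0
      have hd0 : (Finset.univ \ A0).card = n - r := by
        rw [Finset.card_sdiff_of_subset (Finset.subset_univ A0), Finset.card_univ, Fintype.card_fin, hA0card]
      rw [Finset.card_sigma]
      have hconst2 : ∀ A1 ∈ (Finset.univ \ A0).powersetCard s,
          (((Finset.univ \ A0) \ A1).powersetCard r).card = (n - r - s).choose r := by
        intro A1 hA1
        obtain ⟨hA1sub, hA1card⟩ := Finset.mem_powersetCard.1 hA1
        rw [Finset.card_powersetCard, Finset.card_sdiff_of_subset hA1sub, hd0, hA1card]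
      rw [Finset.sum_congr rfl hconst2, Finset.sum_const, Finset.card_powersetCard, hd0,
        smul_eq_mul]
    rw [Finset.sum_congr rfl hconst, Finset.sum_const, Finset.card_powersetCard,
      Finset.card_univ, Fintype.card_fin, smul_eq_mul]
  have hle : (Sset n r s).card ≤ idx2.card := by
    refine Finset.card_le_card_of_injOn
      (fun b => ⟨Finset.univ.filter (fun i => b i = 0),
        Finset.univ.filter (fun i => b i = 1), Finset.univ.filter (fun i => b i = 2)⟩) ?_ ?_
    · intro b hb
      have hbT : HasType b r s r s := (Finset.mem_filter.1 hb).2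
      obtain ⟨e0, e1, e2, e3⟩ := hbT
      rw [hidx2]
      simp only [Finset.mem_coe, Finset.mem_sigma]
      refine ⟨?_, ?_, ?_⟩
      · exact Finset.mem_powersetCard.2 ⟨Finset.filter_subset _ _, e0⟩
      · refine Finset.mem_powersetCard.2 ⟨?_, e1⟩
        intro i hi
        rw [Finset.mem_filter] at hi
        rw [Finset.mem_sdiff, Finset.mem_filter]
        exact ⟨Finset.mem_univ _, fun hc => by
          rw [hi.2] at hc; exact absurd hc.2 (by decide)⟩
      · refine Finset.mem_powersetCard.2 ⟨?_, e2⟩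
        intro i hi
        rw [Finset.mem_filter] at hi
        rw [Finset.mem_sdiff, Finset.mem_sdiff, Finset.mem_filter, Finset.mem_filter]
        refine ⟨⟨Finset.mem_univ _, fun hc => by
          rw [hi.2] at hc; exact absurd hc.2 (by decide)⟩, fun hc => by
          rw [hi.2] at hc; exact absurd hc.2 (by decide)⟩
    · intro b hb b' hb' hg
      have h0 : (Finset.univ.filter fun i => b i = 0) = (Finset.univ.filter fun i => b' i = 0) :=
        congrArg (fun x : (Σ _ : Finset (Fin n), (Σ _ : Finset (Fin n), Finset (Fin n))) => x.1) hg
      have h1 : (Finset.univ.filter fun i => b i = 1) = (Finset.univ.filter fun i => b' i = 1) :=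
        congrArg (fun x : (Σ _ : Finset (Fin n), (Σ _ : Finset (Fin n), Finset (Fin n))) => x.2.1) hg
      have h2 : (Finset.univ.filter fun i => b i = 2) = (Finset.univ.filter fun i => b' i = 2) :=
        congrArg (fun x : (Σ _ : Finset (Fin n), (Σ _ : Finset (Fin n), Finset (Fin n))) => x.2.2) hg
      have hmem : ∀ (c : Fin n → ZMod 4) (i : Fin n) (j : ZMod 4),
          c i = j ↔ i ∈ Finset.univ.filter (fun i' => c i' = j) := by
        intro c i j; rw [Finset.mem_filter]; simp
      funext i
      rcases zmod4_cases (b i) with hc | hc | hc | hc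
      · rw [hc]; symm
        rw [hmem b' i 0, ← h0, ← hmem b i 0]; exact hc
      · rw [hc]; symm
        rw [hmem b' i 1, ← h1, ← hmem b i 1]; exact hc
      · rw [hc]; symm
        rw [hmem b' i 2, ← h2, ← hmem b i 2]; exact hc
      · rw [hc]
        rcases zmod4_cases (b' i) with hc' | hc' | hc' | hc'
        · rw [hmem b' i 0, ← h0, ← hmem b i 0] at hc'; rw [hc] at hc'; exact absurd hc' (by decide)
        · rw [hmem b' i 1, ← h1, ← hmem b i 1] at hc'; rw [hc] at hc'; exact absurd hc' (by decide)
        · rw [hmem b' i 2, ← h2, ← hmem b i 2] at hc'; rw [hc] at hc'; exact absurd hc' (by decide)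
        · rw [hc']
  rw [multinom_val]
  have e1 : r + (s + (r + s)) = n := by omega
  have e2 : s + (r + s) = n - r := by omega
  have e3 : r + s = n - r - s := by omega
  rw [e1, e2, e3]
  exact hle.trans (le_of_eq hcard)

end Stmt15
namespace Stmt15
open Finset

variable {n : ℕ}

lemma mu_bound (r s t0 t1 t2 t3 : ℕ) (hn : n = 2 * (r + s)) (hn10 : 10 ≤ n)
    (v : Fin n → ZMod 4) (hv : HasType v t0 t1 t2 t3)
    (h02 : t0 + t2 ≠ 0) (h13 : t1 + t3 ≠ 0)
    (b : Fin n → ZMod 4) (hb : HasType b r s r s) :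
    ((n : ℤ) - 1) * |mu v b| ≤ ((cls v).card : ℤ) := by
  have hsum := hasType_sum hv
  have hclslow := cls_lower v hv
  obtain ⟨e0, e1, e2, e3⟩ := hv
  have h1 : mu v b = (Tint r s).coeff (expo v) := mu_eq_coeff v b hb
  have h2 : |(Tint r s).coeff (expo v)| ≤ ((pp ^ 2 + qq ^ 2) ^ (r + s)).coeff (expo v) :=
    dom_Tint r s (expo v)
  have h3 := coeff_dom (r + s) v (by rw [e0, e1, e2, e3]; omega)
  rw [e0, e1, e2, e3] at h3
  have hn1 : (0 : ℤ) ≤ (n : ℤ) - 1 := by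
    have : (10 : ℤ) ≤ (n : ℤ) := by exact_mod_cast hn10
    linarith
  by_cases hEv : Even (t0 + t2)
  · obtain ⟨cc, hcc⟩ := hEv
    have hEv : Even (t0 + t2) := ⟨cc, hcc⟩
    rw [if_pos hEv] at h3
    have h4 : |mu v b| ≤ (((r + s).choose ((t0 + t2) / 2)) * ((t0 + t2).choose t0)
        * ((t1 + t3).choose t1) : ℤ) := by
      rw [h1]
      rw [h3] at h2
      exact_mod_cast h2
    have h5 : (2 * (r + s) - 1) * ((r + s).choose ((t0 + t2) / 2))
        ≤ (2 * (r + s)).choose (2 * ((t0 + t2) / 2)) :=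
      binom_key (by omega) (by omega) (by omega)
    have heven : 2 * ((t0 + t2) / 2) = t0 + t2 := by
      obtain ⟨c, hc⟩ := hEv; omega
    rw [heven, ← hn] at h5
    -- assemble in ℕ then cast
    have h6 : (n - 1) * (((r + s).choose ((t0 + t2) / 2)) * (((t0 + t2).choose t0)
        * ((t1 + t3).choose t1))) ≤ (cls v).card := by
      calc (n - 1) * (((r + s).choose ((t0 + t2) / 2)) * (((t0 + t2).choose t0)
            * ((t1 + t3).choose t1)))
          = ((n - 1) * ((r + s).choose ((t0 + t2) / 2))) * (((t0 + t2).choose t0)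
            * ((t1 + t3).choose t1)) := by ring
        _ ≤ (n.choose (t0 + t2)) * (((t0 + t2).choose t0) * ((t1 + t3).choose t1)) := by
            exact Nat.mul_le_mul_right _ h5
        _ ≤ (cls v).card := hclslow
    calc ((n : ℤ) - 1) * |mu v b|
        ≤ ((n : ℤ) - 1) * (((r + s).choose ((t0 + t2) / 2)) * ((t0 + t2).choose t0)
            * ((t1 + t3).choose t1) : ℤ) := mul_le_mul_of_nonneg_left h4 hn1
      _ = (((n - 1) * (((r + s).choose ((t0 + t2) / 2)) * (((t0 + t2).choose t0)
            * ((t1 + t3).choose t1))) : ℕ) : ℤ) := by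
          push_cast [Nat.cast_sub (by omega : 1 ≤ n)]
          ring
      _ ≤ ((cls v).card : ℤ) := by exact_mod_cast h6
  · rw [if_neg hEv] at h3
    have hz : mu v b = 0 := by
      rw [h3] at h2
      rw [h1]
      exact abs_nonpos_iff.mp h2
    rw [hz, abs_zero, mul_zero]
    positivity

end Stmt15

theorem abs_lambda_le (r s n : ℕ) (hn : n = 2 * (r + s)) (hn10 : 10 ≤ n)
    (v : Fin n → ZMod 4) (t0 t1 t2 t3 : ℕ) (hv : HasType v t0 t1 t2 t3)
    (h02 : t0 + t2 ≠ 0) (h13 : t1 + t3 ≠ 0) :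
    ((n : ℤ) - 1) * |lambdaEV r s v| ≤ (multinomRSRS r s : ℤ) := by
  classical
  open Stmt15 Finset in
  have hkey := Stmt15.key_identity (r := r) (s := s) v
  have hmu : ∀ b ∈ Stmt15.Sset n r s, ((n : ℤ) - 1) * |Stmt15.mu v b| ≤ ((Stmt15.cls v).card : ℤ) := by
    intro b hb
    exact Stmt15.mu_bound r s t0 t1 t2 t3 hn hn10 v hv h02 h13 b (Finset.mem_filter.1 hb).2
  have hcls_pos : 0 < (Stmt15.cls v).card := by
    refine Finset.card_pos.2 ⟨v, ?_⟩
    rw [Stmt15.cls, Finset.mem_filter]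
    exact ⟨Finset.mem_univ _, rfl⟩
  have hn1 : (0 : ℤ) ≤ (n : ℤ) - 1 := by
    have : (10 : ℤ) ≤ (n : ℤ) := by exact_mod_cast hn10
    linarith
  have hfinal : ((Stmt15.cls v).card : ℤ) * (((n : ℤ) - 1) * |lambdaEV r s v|)
      ≤ ((Stmt15.cls v).card : ℤ) * ((Stmt15.Sset n r s).card : ℤ) := by
    calc ((Stmt15.cls v).card : ℤ) * (((n : ℤ) - 1) * |lambdaEV r s v|)
        = ((n : ℤ) - 1) * |((Stmt15.cls v).card : ℤ) * lambdaEV r s v| := by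
          rw [abs_mul, abs_of_nonneg (by positivity : (0:ℤ) ≤ ((Stmt15.cls v).card : ℤ))]
          ring
      _ = ((n : ℤ) - 1) * |∑ b ∈ Stmt15.Sset n r s, Stmt15.mu v b| := by rw [hkey]
      _ ≤ ((n : ℤ) - 1) * ∑ b ∈ Stmt15.Sset n r s, |Stmt15.mu v b| :=
          mul_le_mul_of_nonneg_left (Finset.abs_sum_le_sum_abs _ _) hn1
      _ = ∑ b ∈ Stmt15.Sset n r s, ((n : ℤ) - 1) * |Stmt15.mu v b| := Finset.mul_sum _ _ _
      _ ≤ ∑ _b ∈ Stmt15.Sset n r s, ((Stmt15.cls v).card : ℤ) := Finset.sum_le_sum hmu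
      _ = ((Stmt15.Sset n r s).card : ℤ) * ((Stmt15.cls v).card : ℤ) := by
          rw [Finset.sum_const, nsmul_eq_mul]
      _ = ((Stmt15.cls v).card : ℤ) * ((Stmt15.Sset n r s).card : ℤ) := mul_comm _ _
  have h9 : ((n : ℤ) - 1) * |lambdaEV r s v| ≤ ((Stmt15.Sset n r s).card : ℤ) :=
    le_of_mul_le_mul_left hfinal (by exact_mod_cast hcls_pos)
  refine h9.trans ?_
  exact_mod_cast Stmt15.Sset_le r s hn
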